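/- The semi-tensor product of matrices is associative: for matrices A, B, C of arbitrary dimensions, (A ⋉ B) ⋉ C = A ⋉ (B ⋉ C). -/

import Mathlib

open Matrix

/-- Row/left component of a lexicographic index in `Fin (a*b)`. -/
def fdiv {a b : ℕ} (k : Fin (a * b)) : Fin a :=
  ⟨(k : ℕ) / b, Nat.div_lt_of_lt_mul (Nat.mul_comm a b ▸ k.isLt)⟩

/-- Right component of a lexicographic index in `Fin (a*b)`. -/
def fmod {a b : ℕ} (k : Fin (a * b)) : Fin b :=
  ⟨(k : ℕ) % b, Nat.mod_lt _ (Nat.pos_of_ne_zero (by rintro rfl; exact absurd k.isLt (by simp)))⟩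

/-- Kronecker product of column vectors (lexicographic order of indices). -/
def vKron {m n : ℕ} (x : Fin m → ℝ) (y : Fin n → ℝ) : Fin (m * n) → ℝ :=
  fun k => x (fdiv k) * y (fmod k)

/-- Kronecker product of matrices, with `Fin`-indexed dimensions. -/
def mKron {m n p q : ℕ} (A : Matrix (Fin m) (Fin n) ℝ) (B : Matrix (Fin p) (Fin q) ℝ) :
    Matrix (Fin (m * p)) (Fin (n * q)) ℝ :=
  fun i j => A (fdiv i) (fdiv j) * B (fmod i) (fmod j)

/-- Semi-tensor product of matrices: A ⋉ B = (A ⊗ I_{t/n})(B ⊗ I_{t/p}), t = lcm n p. -/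
def stp {m n p q : ℕ} (A : Matrix (Fin m) (Fin n) ℝ) (B : Matrix (Fin p) (Fin q) ℝ) :
    Matrix (Fin (m * (Nat.lcm n p / n))) (Fin (q * (Nat.lcm n p / p))) ℝ :=
  mKron A (1 : Matrix (Fin (Nat.lcm n p / n)) (Fin (Nat.lcm n p / n)) ℝ) *
    (Matrix.reindex (finCongr (by
        rw [Nat.mul_div_cancel' (Nat.dvd_lcm_right n p),
          Nat.mul_div_cancel' (Nat.dvd_lcm_left n p)])) (Equiv.refl _)
      (mKron B (1 : Matrix (Fin (Nat.lcm n p / p)) (Fin (Nat.lcm n p / p)) ℝ)))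

/-- The swap matrix W_{[m,n]}: sends x ⊗ y to y ⊗ x. -/
def swapM (m n : ℕ) : Matrix (Fin (n * m)) (Fin (m * n)) ℝ :=
  fun i j => if (i : ℕ) = (fmod j : ℕ) * m + (fdiv j : ℕ) then 1 else 0

/-- Column-stacking vectorization of a matrix. -/
def vecc {m n : ℕ} (A : Matrix (Fin m) (Fin n) ℝ) : Fin (n * m) → ℝ :=
  fun k => A (fmod k) (fdiv k)

/-- Iterated Kronecker product of column vectors. -/
def kronD : (d : ℕ) → (n : Fin d → ℕ) → ((i : Fin d) → Fin (n i) → ℝ) → Fin (∏ i, n i) → ℝ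
  | 0, _, _ => fun _ => 1
  | d + 1, n, x => fun k =>
      vKron (x 0) (kronD d (fun i => n i.succ) (fun i => x i.succ))
        (Fin.cast (by rw [Fin.prod_univ_succ]) k)

/-- Lexicographic encoding of a multi-index into a single natural number. -/
def encode : (d : ℕ) → (n : Fin d → ℕ) → ((i : Fin d) → Fin (n i)) → ℕ
  | 0, _, _ => 0
  | d + 1, n, f =>
      (f 0 : ℕ) * (∏ i : Fin d, n i.succ) + encode d (fun i => n i.succ) (fun i => f i.succ)

theorem encode_lt : ∀ (d : ℕ) (n : Fin d → ℕ) (f : (i : Fin d) → Fin (n i)),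
    encode d n f < ∏ i, n i := by
  intro d
  induction d with
  | zero => intro n f; simp [encode]
  | succ d ih =>
    intro n f
    rw [Fin.prod_univ_succ]
    have h1 := ih (fun i => n i.succ) (fun i => f i.succ)
    have h2 := (f 0).isLt
    calc (f 0 : ℕ) * (∏ i : Fin d, n i.succ)
        + encode d (fun i => n i.succ) (fun i => f i.succ)
        < (f 0 : ℕ) * (∏ i : Fin d, n i.succ) + (∏ i : Fin d, n i.succ) :=
          Nat.add_lt_add_left h1 _
      _ = ((f 0 : ℕ) + 1) * (∏ i : Fin d, n i.succ) := by ring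
      _ ≤ n 0 * (∏ i : Fin d, n i.succ) := Nat.mul_le_mul_right _ h2

/-- The MDA projection map Ξ_i determined by the head multi-index e. -/
def proj (d : ℕ) (n : Fin d → ℕ) (e : (i : Fin d) → Fin (n i)) (i : Fin d)
    (x : Fin (∏ j, n j) → ℝ) : Fin (n i) → ℝ :=
  fun k => x ⟨encode d n (Function.update e i k), encode_lt d n _⟩

/-- A vector is monic if its first nonzero entry equals 1. -/
def Monic {N : ℕ} (v : Fin N → ℝ) : Prop :=
  ∃ e : Fin N, v e = 1 ∧ ∀ j : Fin N, j < e → v j = 0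

noncomputable def ext2 {m n : ℕ} (A : Matrix (Fin m) (Fin n) ℝ) : ℕ → ℕ → ℝ :=
  fun i j => if h : i < m ∧ j < n then A ⟨i, h.1⟩ ⟨j, h.2⟩ else 0

noncomputable def EE {m n : ℕ} (A : Matrix (Fin m) (Fin n) ℝ) (c : ℕ) : ℕ → ℕ → ℝ :=
  fun i j => (if i % c = j % c then (1:ℝ) else 0) * ext2 A (i / c) (j / c)

lemma mod_mul_decomp (i c d : ℕ) : i % (c * d) = (i / d % c) * d + i % d := by
  rw [mul_comm c d, Nat.mod_mul]; ring

lemma div_mod_of_decomp {x r d : ℕ} (hr : r < d) :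
    (x * d + r) / d = x ∧ (x * d + r) % d = r := by
  have hd : 0 < d := lt_of_le_of_lt (Nat.zero_le _) hr
  constructor
  · rw [add_comm, Nat.add_mul_div_right _ _ hd, Nat.div_eq_of_lt hr, zero_add]
  · rw [add_comm, Nat.add_mul_mod_self_right, Nat.mod_eq_of_lt hr]

lemma mod_mul_eq_iff (i j c : ℕ) {d : ℕ} (hd : 0 < d) :
    i % (c * d) = j % (c * d) ↔ (i % d = j % d ∧ i / d % c = j / d % c) := by
  have di := div_mod_of_decomp (x := i / d % c) (r := i % d) (Nat.mod_lt _ hd)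
  have dj := div_mod_of_decomp (x := j / d % c) (r := j % d) (Nat.mod_lt _ hd)
  have hi := mod_mul_decomp i c d
  have hj := mod_mul_decomp j c d
  constructor
  · intro h
    have h1 : (i % (c*d)) % d = (j % (c*d)) % d := by rw [h]
    have h2 : (i % (c*d)) / d = (j % (c*d)) / d := by rw [h]
    rw [hi, hj, di.2, dj.2] at h1
    rw [hi, hj, di.1, dj.1] at h2
    exact ⟨h1, h2⟩
  · rintro ⟨h1, h2⟩
    rw [hi, hj, h1, h2]

lemma EE_flatten {m n : ℕ} (A : Matrix (Fin m) (Fin n) ℝ) (c : ℕ) {d : ℕ} (hd : 0 < d) (i j : ℕ) :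
    EE A (c * d) i j = (if i % d = j % d then (1:ℝ) else 0) * EE A c (i / d) (j / d) := by
  unfold EE
  rw [Nat.div_div_eq_div_mul, Nat.div_div_eq_div_mul, mul_comm d c]
  have hiff := mod_mul_eq_iff i j c hd
  by_cases h1 : i % d = j % d
  · by_cases h2 : i / d % c = j / d % c
    · rw [if_pos (hiff.mpr ⟨h1, h2⟩), if_pos h1, if_pos h2]; ring
    · rw [if_neg (fun h => h2 (hiff.mp h).2), if_pos h1, if_neg h2]; ring
  · rw [if_neg (fun h => h1 (hiff.mp h).1), if_neg h1]; ring

lemma mKron_one_apply {m n c : ℕ} (A : Matrix (Fin m) (Fin n) ℝ)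
    (i : Fin (m * c)) (j : Fin (n * c)) :
    mKron A (1 : Matrix (Fin c) (Fin c) ℝ) i j = EE A c (i : ℕ) (j : ℕ) := by
  have hi : (i : ℕ) / c < m := Nat.div_lt_of_lt_mul (Nat.mul_comm m c ▸ i.isLt)
  have hj : (j : ℕ) / c < n := Nat.div_lt_of_lt_mul (Nat.mul_comm n c ▸ j.isLt)
  unfold mKron EE ext2 fdiv fmod
  rw [Matrix.one_apply, dif_pos ⟨hi, hj⟩]
  by_cases h : (i : ℕ) % c = (j : ℕ) % c
  · rw [if_pos h, if_pos (by exact Fin.ext h)]; ring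
  · rw [if_neg h, if_neg (fun hh => h (Fin.ext_iff.mp hh))]; ring

lemma stp_apply {m n p q : ℕ} (A : Matrix (Fin m) (Fin n) ℝ) (B : Matrix (Fin p) (Fin q) ℝ)
    (i : Fin (m * (Nat.lcm n p / n))) (j : Fin (q * (Nat.lcm n p / p))) :
    stp A B i j = ∑ k ∈ Finset.range (Nat.lcm n p),
      EE A (Nat.lcm n p / n) (i : ℕ) k * EE B (Nat.lcm n p / p) k (j : ℕ) := by
  unfold stp
  erw [Matrix.mul_apply]
  rw [Matrix.reindex_apply]
  calc ∑ k : Fin (n * (Nat.lcm n p / n)), mKron A 1 i k *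
          (mKron B 1).submatrix (⇑(finCongr _).symm) (⇑(Equiv.refl _).symm) k j
      = ∑ k : Fin (n * (Nat.lcm n p / n)),
          (fun t => EE A (Nat.lcm n p / n) (i : ℕ) t * EE B (Nat.lcm n p / p) t (j : ℕ)) (k : ℕ) := by
        refine Finset.sum_congr rfl (fun k _ => ?_)
        rw [Matrix.submatrix_apply, mKron_one_apply, mKron_one_apply]
        simp
    _ = ∑ t ∈ Finset.range (n * (Nat.lcm n p / n)),
          (fun t => EE A (Nat.lcm n p / n) (i : ℕ) t * EE B (Nat.lcm n p / p) t (j : ℕ)) t :=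
        Fin.sum_univ_eq_sum_range
          (fun t => EE A (Nat.lcm n p / n) (i : ℕ) t * EE B (Nat.lcm n p / p) t (j : ℕ))
          (n * (Nat.lcm n p / n))
    _ = _ := by rw [Nat.mul_div_cancel' (Nat.dvd_lcm_left n p)]

lemma sum_range_mul' (f : ℕ → ℝ) (a c : ℕ) :
    ∑ k ∈ Finset.range (a * c), f k
      = ∑ x ∈ Finset.range a, ∑ y ∈ Finset.range c, f (x * c + y) := by
  induction a with
  | zero => simp
  | succ a ih =>
    rw [Finset.sum_range_succ, ← ih, Nat.succ_mul, Finset.sum_range_add]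

lemma EE_eq {m n : ℕ} (M : Matrix (Fin m) (Fin n) ℝ) (g i j : ℕ) (hi : i / g < m) (hj : j / g < n) :
    EE M g i j = (if i % g = j % g then (1:ℝ) else 0) * M ⟨i / g, hi⟩ ⟨j / g, hj⟩ := by
  unfold EE ext2
  rw [dif_pos ⟨hi, hj⟩]

lemma collapse {mb nb mc nc : ℕ} (B : Matrix (Fin mb) (Fin nb) ℝ) (C : Matrix (Fin mc) (Fin nc) ℝ)
    (b c N : ℕ) {g : ℕ} (hg : 0 < g) (i l : ℕ) :
    ∑ k ∈ Finset.range (N * g), EE B (b * g) i k * EE C (c * g) k l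
      = (if i % g = l % g then (1:ℝ) else 0) *
        ∑ k ∈ Finset.range N, EE B b (i / g) k * EE C c k (l / g) := by
  rw [sum_range_mul', Finset.mul_sum]
  refine Finset.sum_congr rfl (fun k _ => ?_)
  rw [Finset.sum_eq_single (i % g)]
  · have hd := div_mod_of_decomp (x := k) (r := i % g) (Nat.mod_lt _ hg)
    rw [EE_flatten B b hg, EE_flatten C c hg, hd.1, hd.2, if_pos rfl]
    ring
  · intro y hy hne
    have hylt : y < g := Finset.mem_range.mp hy
    have hdy := div_mod_of_decomp (x := k) (r := y) hylt
    have hb : ¬ (i % (b * g) = (k * g + y) % (b * g)) := by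
      intro hEq
      have h2 : i % (b * g) % g = (k * g + y) % (b * g) % g := by rw [hEq]
      rw [Nat.mod_mod_of_dvd _ (dvd_mul_left g b), Nat.mod_mod_of_dvd _ (dvd_mul_left g b),
        hdy.2] at h2
      exact hne h2.symm
    unfold EE
    rw [if_neg hb, zero_mul, zero_mul]
  · intro hmem
    exact absurd (Finset.mem_range.mpr (Nat.mod_lt _ hg)) hmem


lemma left_expand {m n p q u v : ℕ}
    (A : Matrix (Fin m) (Fin n) ℝ) (B : Matrix (Fin p) (Fin q) ℝ) (C : Matrix (Fin u) (Fin v) ℝ)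
    (hγ : 0 < Nat.lcm (q * (Nat.lcm n p / p)) u / (q * (Nat.lcm n p / p)))
    (i' : Fin (m * (Nat.lcm n p / n) * (Nat.lcm (q * (Nat.lcm n p / p)) u / (q * (Nat.lcm n p / p)))))
    (j' : Fin (v * (Nat.lcm (q * (Nat.lcm n p / p)) u / u))) :
    stp (stp A B) C i' j'
      = ∑ l ∈ Finset.range (Nat.lcm (q * (Nat.lcm n p / p)) u),
          (∑ k ∈ Finset.range (Nat.lcm n p * (Nat.lcm (q * (Nat.lcm n p / p)) u / (q * (Nat.lcm n p / p)))),
            EE A ((Nat.lcm n p / n) * (Nat.lcm (q * (Nat.lcm n p / p)) u / (q * (Nat.lcm n p / p)))) (i' : ℕ) k *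
            EE B ((Nat.lcm n p / p) * (Nat.lcm (q * (Nat.lcm n p / p)) u / (q * (Nat.lcm n p / p)))) k l) *
          EE C (Nat.lcm (q * (Nat.lcm n p / p)) u / u) l (j' : ℕ) := by
  rw [stp_apply]
  refine Finset.sum_congr rfl (fun l hl => ?_)
  congr 1
  have hlt : l < q * (Nat.lcm n p / p) * (Nat.lcm (q * (Nat.lcm n p / p)) u / (q * (Nat.lcm n p / p))) := by
    rw [Nat.mul_div_cancel' (Nat.dvd_lcm_left _ _)]
    exact Finset.mem_range.mp hl
  have hi : (i' : ℕ) / (Nat.lcm (q * (Nat.lcm n p / p)) u / (q * (Nat.lcm n p / p))) < m * (Nat.lcm n p / n) := Nat.div_lt_of_lt_mul (lt_of_lt_of_eq i'.isLt (Nat.mul_comm _ _))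
  have hl2 : l / (Nat.lcm (q * (Nat.lcm n p / p)) u / (q * (Nat.lcm n p / p))) < q * (Nat.lcm n p / p) := Nat.div_lt_of_lt_mul (lt_of_lt_of_eq hlt (Nat.mul_comm _ _))
  rw [EE_eq (stp A B) (Nat.lcm (q * (Nat.lcm n p / p)) u / (q * (Nat.lcm n p / p))) (i' : ℕ) l hi hl2, stp_apply]
  exact (collapse A B (Nat.lcm n p / n) (Nat.lcm n p / p) (Nat.lcm n p) hγ (i' : ℕ) l).symm

lemma right_expand {m n p q u v : ℕ}
    (A : Matrix (Fin m) (Fin n) ℝ) (B : Matrix (Fin p) (Fin q) ℝ) (C : Matrix (Fin u) (Fin v) ℝ)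
    (hγ2 : 0 < Nat.lcm n (p * (Nat.lcm q u / q)) / (p * (Nat.lcm q u / q)))
    (i : Fin (m * (Nat.lcm n (p * (Nat.lcm q u / q)) / n)))
    (j : Fin (v * (Nat.lcm q u / u) * (Nat.lcm n (p * (Nat.lcm q u / q)) / (p * (Nat.lcm q u / q))))) :
    stp A (stp B C) i j
      = ∑ k ∈ Finset.range (Nat.lcm n (p * (Nat.lcm q u / q))),
          EE A (Nat.lcm n (p * (Nat.lcm q u / q)) / n) (i : ℕ) k *
          ∑ l ∈ Finset.range (Nat.lcm q u * (Nat.lcm n (p * (Nat.lcm q u / q)) / (p * (Nat.lcm q u / q)))),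
            EE B ((Nat.lcm q u / q) * (Nat.lcm n (p * (Nat.lcm q u / q)) / (p * (Nat.lcm q u / q)))) k l *
            EE C ((Nat.lcm q u / u) * (Nat.lcm n (p * (Nat.lcm q u / q)) / (p * (Nat.lcm q u / q)))) l (j : ℕ) := by
  rw [stp_apply]
  refine Finset.sum_congr rfl (fun k hk => ?_)
  congr 1
  have hlt : k < p * (Nat.lcm q u / q) * (Nat.lcm n (p * (Nat.lcm q u / q)) / (p * (Nat.lcm q u / q))) := by
    rw [Nat.mul_div_cancel' (Nat.dvd_lcm_right _ _)]
    exact Finset.mem_range.mp hk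
  have hk2 : k / (Nat.lcm n (p * (Nat.lcm q u / q)) / (p * (Nat.lcm q u / q))) < p * (Nat.lcm q u / q) := Nat.div_lt_of_lt_mul (lt_of_lt_of_eq hlt (Nat.mul_comm _ _))
  have hj : (j : ℕ) / (Nat.lcm n (p * (Nat.lcm q u / q)) / (p * (Nat.lcm q u / q))) < v * (Nat.lcm q u / u) := Nat.div_lt_of_lt_mul (lt_of_lt_of_eq j.isLt (Nat.mul_comm _ _))
  rw [EE_eq (stp B C) (Nat.lcm n (p * (Nat.lcm q u / q)) / (p * (Nat.lcm q u / q))) k (j : ℕ) hk2 hj, stp_apply]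
  exact (collapse B C (Nat.lcm q u / q) (Nat.lcm q u / u) (Nat.lcm q u) hγ2 k (j : ℕ)).symm

/-- The semi-tensor product is associative:
(A ⋉ B) ⋉ C = A ⋉ (B ⋉ C) (up to the identification of the equal dimensions). -/
theorem stp_assoc (m n p q u v : ℕ)
    (A : Matrix (Fin m) (Fin n) ℝ) (B : Matrix (Fin p) (Fin q) ℝ) (C : Matrix (Fin u) (Fin v) ℝ)
    (h₁ : m * (Nat.lcm n p / n) * (Nat.lcm (q * (Nat.lcm n p / p)) u / (q * (Nat.lcm n p / p)))
        = m * (Nat.lcm n (p * (Nat.lcm q u / q)) / n))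
    (h₂ : v * (Nat.lcm (q * (Nat.lcm n p / p)) u / u)
        = v * (Nat.lcm q u / u) * (Nat.lcm n (p * (Nat.lcm q u / q)) / (p * (Nat.lcm q u / q)))) :
    Matrix.reindex (finCongr h₁) (finCongr h₂) (stp (stp A B) C) = stp A (stp B C) := by
  by_cases hm : m = 0
  · ext i j
    exact absurd i.isLt (by simp [hm])
  by_cases hv : v = 0
  · ext i j
    exact absurd j.isLt (by simp [hv])
  by_cases hn : n = 0
  · ext i j
    exact absurd i.isLt (by simp [hn, Nat.lcm_zero_left, Nat.zero_div])
  by_cases hp : p = 0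
  · ext i j
    exact absurd i.isLt (by simp [hp, Nat.lcm_zero_right, Nat.zero_div])
  by_cases hq : q = 0
  · ext i j
    exact absurd i.isLt (by simp [hq, Nat.lcm_zero_left, Nat.lcm_zero_right, Nat.zero_div])
  by_cases hu : u = 0
  · ext i j
    exact absurd j.isLt (by simp [hu, Nat.lcm_zero_right, Nat.zero_div])
  have hm' : 0 < m := Nat.pos_of_ne_zero hm
  have hv' : 0 < v := Nat.pos_of_ne_zero hv
  have hn' : 0 < n := Nat.pos_of_ne_zero hn
  have hp' : 0 < p := Nat.pos_of_ne_zero hp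
  have hq' : 0 < q := Nat.pos_of_ne_zero hq
  have hu' : 0 < u := Nat.pos_of_ne_zero hu
  have hl1 : 0 < Nat.lcm n p := Nat.pos_of_ne_zero (Nat.lcm_ne_zero hn hp)
  have hbe : 0 < Nat.lcm n p / p := Nat.div_pos (Nat.le_of_dvd hl1 (Nat.dvd_lcm_right n p)) hp'
  have hqbe : 0 < q * (Nat.lcm n p / p) := Nat.mul_pos hq' hbe
  have hl2 : 0 < Nat.lcm (q * (Nat.lcm n p / p)) u := Nat.pos_of_ne_zero (Nat.lcm_ne_zero (by omega) hu)
  have hγ : 0 < Nat.lcm (q * (Nat.lcm n p / p)) u / (q * (Nat.lcm n p / p)) := Nat.div_pos (Nat.le_of_dvd hl2 (Nat.dvd_lcm_left _ _)) hqbe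
  have hl3 : 0 < Nat.lcm q u := Nat.pos_of_ne_zero (Nat.lcm_ne_zero hq hu)
  have hb2 : 0 < Nat.lcm q u / q := Nat.div_pos (Nat.le_of_dvd hl3 (Nat.dvd_lcm_left q u)) hq'
  have hpb2 : 0 < p * (Nat.lcm q u / q) := Nat.mul_pos hp' hb2
  have hl4 : 0 < Nat.lcm n (p * (Nat.lcm q u / q)) := Nat.pos_of_ne_zero (Nat.lcm_ne_zero hn (by omega))
  have hγ2 : 0 < Nat.lcm n (p * (Nat.lcm q u / q)) / (p * (Nat.lcm q u / q)) := Nat.div_pos (Nat.le_of_dvd hl4 (Nat.dvd_lcm_right _ _)) hpb2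
  have e1 : n * (Nat.lcm n p / n) = Nat.lcm n p := Nat.mul_div_cancel' (Nat.dvd_lcm_left n p)
  have e2 : p * (Nat.lcm n p / p) = Nat.lcm n p := Nat.mul_div_cancel' (Nat.dvd_lcm_right n p)
  have e4 : u * (Nat.lcm (q * (Nat.lcm n p / p)) u / u) = Nat.lcm (q * (Nat.lcm n p / p)) u := Nat.mul_div_cancel' (Nat.dvd_lcm_right _ _)
  have e6 : u * (Nat.lcm q u / u) = Nat.lcm q u := Nat.mul_div_cancel' (Nat.dvd_lcm_right q u)
  have e7 : n * (Nat.lcm n (p * (Nat.lcm q u / q)) / n) = Nat.lcm n (p * (Nat.lcm q u / q)) := Nat.mul_div_cancel' (Nat.dvd_lcm_left _ _)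
  have e8 : (p * (Nat.lcm q u / q)) * (Nat.lcm n (p * (Nat.lcm q u / q)) / (p * (Nat.lcm q u / q))) = Nat.lcm n (p * (Nat.lcm q u / q)) := Nat.mul_div_cancel' (Nat.dvd_lcm_right _ _)
  have hac : (Nat.lcm n p / n) * (Nat.lcm (q * (Nat.lcm n p / p)) u / (q * (Nat.lcm n p / p))) = Nat.lcm n (p * (Nat.lcm q u / q)) / n :=
    Nat.eq_of_mul_eq_mul_left hm' (by rw [← mul_assoc]; exact h₁)
  have hdd : (Nat.lcm (q * (Nat.lcm n p / p)) u / u) = (Nat.lcm q u / u) * (Nat.lcm n (p * (Nat.lcm q u / q)) / (p * (Nat.lcm q u / q))) :=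
    Nat.eq_of_mul_eq_mul_left hv' (by rw [← mul_assoc]; exact h₂)
  have ht1γ : Nat.lcm n p * (Nat.lcm (q * (Nat.lcm n p / p)) u / (q * (Nat.lcm n p / p))) = Nat.lcm n (p * (Nat.lcm q u / q)) := by
    calc Nat.lcm n p * (Nat.lcm (q * (Nat.lcm n p / p)) u / (q * (Nat.lcm n p / p))) = n * (Nat.lcm n p / n) * (Nat.lcm (q * (Nat.lcm n p / p)) u / (q * (Nat.lcm n p / p))) := by rw [e1]
      _ = n * ((Nat.lcm n p / n) * (Nat.lcm (q * (Nat.lcm n p / p)) u / (q * (Nat.lcm n p / p)))) := mul_assoc _ _ _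
      _ = n * (Nat.lcm n (p * (Nat.lcm q u / q)) / n) := by rw [hac]
      _ = Nat.lcm n (p * (Nat.lcm q u / q)) := e7
  have hbc : (Nat.lcm n p / p) * (Nat.lcm (q * (Nat.lcm n p / p)) u / (q * (Nat.lcm n p / p))) = (Nat.lcm q u / q) * (Nat.lcm n (p * (Nat.lcm q u / q)) / (p * (Nat.lcm q u / q))) := by
    have c1 : p * ((Nat.lcm n p / p) * (Nat.lcm (q * (Nat.lcm n p / p)) u / (q * (Nat.lcm n p / p)))) = Nat.lcm n (p * (Nat.lcm q u / q)) := by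
      calc p * ((Nat.lcm n p / p) * (Nat.lcm (q * (Nat.lcm n p / p)) u / (q * (Nat.lcm n p / p)))) = (p * (Nat.lcm n p / p)) * (Nat.lcm (q * (Nat.lcm n p / p)) u / (q * (Nat.lcm n p / p))) := (mul_assoc _ _ _).symm
        _ = Nat.lcm n p * (Nat.lcm (q * (Nat.lcm n p / p)) u / (q * (Nat.lcm n p / p))) := by rw [e2]
        _ = Nat.lcm n (p * (Nat.lcm q u / q)) := ht1γ
    have c2 : p * ((Nat.lcm q u / q) * (Nat.lcm n (p * (Nat.lcm q u / q)) / (p * (Nat.lcm q u / q)))) = Nat.lcm n (p * (Nat.lcm q u / q)) := by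
      calc p * ((Nat.lcm q u / q) * (Nat.lcm n (p * (Nat.lcm q u / q)) / (p * (Nat.lcm q u / q)))) = (p * (Nat.lcm q u / q)) * (Nat.lcm n (p * (Nat.lcm q u / q)) / (p * (Nat.lcm q u / q))) := (mul_assoc _ _ _).symm
        _ = Nat.lcm n (p * (Nat.lcm q u / q)) := e8
    exact Nat.eq_of_mul_eq_mul_left hp' (c1.trans c2.symm)
  have ht2 : (Nat.lcm (q * (Nat.lcm n p / p)) u) = Nat.lcm q u * (Nat.lcm n (p * (Nat.lcm q u / q)) / (p * (Nat.lcm q u / q))) := by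
    rw [← e4, hdd, ← mul_assoc, e6]
  ext i j
  rw [Matrix.reindex_apply, Matrix.submatrix_apply,
    left_expand A B C hγ ((finCongr h₁).symm i) ((finCongr h₂).symm j),
    right_expand A B C hγ2 i j]
  simp only [finCongr_symm_apply, Fin.coe_cast]
  rw [hac, hbc, hdd, ht1γ, ht2]
  simp_rw [Finset.sum_mul, Finset.mul_sum, mul_assoc]
  rw [Finset.sum_comm]
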